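/- Every square real matrix is similar to its transpose. -/

import Mathlib

open Matrix Polynomial DirectSum

lemma block_form (g : ℝ[X]) (hg : g ≠ 0) :
    ∃ B : (ℝ[X] ⧸ (ℝ[X] ∙ g)) → (ℝ[X] ⧸ (ℝ[X] ∙ g)) → ℝ,
      (∀ z z' w, B (z + z') w = B z w + B z' w) ∧
      (∀ z w w', B z (w + w') = B z w + B z w') ∧
      (∀ (r : ℝ) z w, B ((C r : ℝ[X]) • z) w = r * B z w) ∧
      (∀ (r : ℝ) z w, B z ((C r : ℝ[X]) • w) = r * B z w) ∧
      (∀ z w, B ((X : ℝ[X]) • z) w = B z ((X : ℝ[X]) • w)) ∧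
      (∀ z, z ≠ 0 → ∃ w, B z w ≠ 0) := by
  classical
  set q : ℝ[X] := g * C g.leadingCoeff⁻¹ with hq_def
  have hq : q.Monic := monic_mul_leadingCoeff_inv hg
  -- membership in the span is divisibility by q
  have hmem : ∀ a : ℝ[X], a ∈ (ℝ[X] ∙ g) ↔ q ∣ a := by
    intro a
    rw [Submodule.mem_span_singleton]
    constructor
    · rintro ⟨c, rfl⟩
      refine Dvd.dvd.mul_left ?_ c
      exact ⟨C g.leadingCoeff, by
        rw [hq_def, mul_assoc, ← C_mul, inv_mul_cancel₀ (leadingCoeff_ne_zero.mpr hg), C_1,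
          mul_one]⟩
    · rintro ⟨c, rfl⟩
      exact ⟨c * C g.leadingCoeff⁻¹, by rw [smul_eq_mul]; ring⟩
  set d : ℕ := q.natDegree with hd
  have hsur := Submodule.Quotient.mk_surjective (ℝ[X] ∙ g)
  set rep : (ℝ[X] ⧸ (ℝ[X] ∙ g)) → ℝ[X] := fun z => (hsur z).choose with hrep_def
  have hrep : ∀ z, Submodule.Quotient.mk (rep z) = z := fun z => (hsur z).choose_spec
  -- well-definedness
  have wd : ∀ a b : ℝ[X], (Submodule.Quotient.mk a : ℝ[X] ⧸ (ℝ[X] ∙ g)) = Submodule.Quotient.mk b →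
      ∀ c, (a * c) %ₘ q = (b * c) %ₘ q := by
    intro a b hab c
    have h1 : q ∣ a - b := (hmem _).mp ((Submodule.Quotient.eq _).mp hab)
    have h2 : q ∣ a * c - b * c := by
      obtain ⟨t, ht⟩ := h1
      exact ⟨t * c, by rw [← sub_mul, ht]; ring⟩
    have := (modByMonic_eq_zero_iff_dvd hq).mpr h2
    rw [sub_modByMonic, sub_eq_zero] at this
    exact this
  set B : (ℝ[X] ⧸ (ℝ[X] ∙ g)) → (ℝ[X] ⧸ (ℝ[X] ∙ g)) → ℝ :=
    fun z w => ((rep z * rep w) %ₘ q).coeff (d - 1) with hB_def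
  have hBmk : ∀ a b : ℝ[X],
      B (Submodule.Quotient.mk a) (Submodule.Quotient.mk b) = ((a * b) %ₘ q).coeff (d - 1) := by
    intro a b
    have h1 := wd _ _ (hrep (Submodule.Quotient.mk a)) b
    have h2 := wd _ _ (hrep (Submodule.Quotient.mk b)) (rep (Submodule.Quotient.mk a))
    simp only [hB_def]
    rw [mul_comm (rep (Submodule.Quotient.mk a)), h2, mul_comm, h1]
  refine ⟨B, ?_, ?_, ?_, ?_, ?_, ?_⟩
  · intro z z' w
    obtain ⟨a, rfl⟩ := hsur z; obtain ⟨a', rfl⟩ := hsur z'; obtain ⟨b, rfl⟩ := hsur w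
    rw [← Submodule.Quotient.mk_add, hBmk, hBmk, hBmk, add_mul, add_modByMonic, coeff_add]
  · intro z w w'
    obtain ⟨a, rfl⟩ := hsur z; obtain ⟨b, rfl⟩ := hsur w; obtain ⟨b', rfl⟩ := hsur w'
    rw [← Submodule.Quotient.mk_add, hBmk, hBmk, hBmk, mul_add, add_modByMonic, coeff_add]
  · intro r z w
    obtain ⟨a, rfl⟩ := hsur z; obtain ⟨b, rfl⟩ := hsur w
    rw [← Submodule.Quotient.mk_smul, hBmk, hBmk, smul_eq_mul]
    have : C r * a * b = r • (a * b) := by rw [smul_eq_C_mul]; ring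
    rw [this, smul_modByMonic, coeff_smul, smul_eq_mul]
  · intro r z w
    obtain ⟨a, rfl⟩ := hsur z; obtain ⟨b, rfl⟩ := hsur w
    rw [← Submodule.Quotient.mk_smul, hBmk, hBmk, smul_eq_mul]
    have : a * (C r * b) = r • (a * b) := by rw [smul_eq_C_mul]; ring
    rw [this, smul_modByMonic, coeff_smul, smul_eq_mul]
  · intro z w
    obtain ⟨a, rfl⟩ := hsur z; obtain ⟨b, rfl⟩ := hsur w
    rw [← Submodule.Quotient.mk_smul, ← Submodule.Quotient.mk_smul, hBmk, hBmk, smul_eq_mul,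
      smul_eq_mul]
    ring_nf
  · intro z hz
    obtain ⟨a, rfl⟩ := hsur z
    set p : ℝ[X] := a %ₘ q with hp_def
    have hmkp : (Submodule.Quotient.mk p : ℝ[X] ⧸ (ℝ[X] ∙ g)) = Submodule.Quotient.mk a := by
      rw [Submodule.Quotient.eq]
      refine (hmem _).mpr ?_
      have h := modByMonic_add_div a q
      refine ⟨-(a /ₘ q), ?_⟩
      rw [hp_def, mul_neg]
      linear_combination h
    have hp0 : p ≠ 0 := by
      rintro h
      exact hz (by rw [← hmkp, h, Submodule.Quotient.mk_zero])
    have hdeg : p.degree < q.degree := degree_modByMonic_lt a hq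
    have hk : p.natDegree < d := natDegree_lt_natDegree hp0 hdeg
    set k : ℕ := p.natDegree
    refine ⟨Submodule.Quotient.mk (X ^ (d - 1 - k)), ?_⟩
    rw [hBmk]
    have h1 : (a * X ^ (d - 1 - k)) %ₘ q = (p * X ^ (d - 1 - k)) %ₘ q :=
      wd _ _ hmkp.symm _
    have hdk : k + (d - 1 - k) = d - 1 := by omega
    have hq0 : q ≠ 0 := hq.ne_zero
    have hdq : q.degree = (d : WithBot ℕ) := degree_eq_natDegree hq0
    have hdeg2 : (p * X ^ (d - 1 - k)).degree = ((d - 1 : ℕ) : WithBot ℕ) := by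
      rw [degree_mul, degree_X_pow, degree_eq_natDegree hp0, ← Nat.cast_add, hdk]
    have h2 : (p * X ^ (d - 1 - k)) %ₘ q = p * X ^ (d - 1 - k) := by
      rw [modByMonic_eq_self_iff hq, hdeg2, hdq]
      exact_mod_cast (by omega : d - 1 < d)
    rw [h1, h2]
    have h3 := coeff_mul_X_pow p (d - 1 - k) k
    rw [hdk] at h3
    rw [h3]
    exact leadingCoeff_ne_zero.mpr hp0

lemma exists_form (M : Type) [AddCommGroup M] [Module ℝ[X] M] [Module.Finite ℝ[X] M]
    (hT : Module.IsTorsion ℝ[X] M) :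
    ∃ B : M → M → ℝ,
      (∀ z z' w, B (z + z') w = B z w + B z' w) ∧
      (∀ z w w', B z (w + w') = B z w + B z w') ∧
      (∀ (r : ℝ) z w, B ((C r : ℝ[X]) • z) w = r * B z w) ∧
      (∀ (r : ℝ) z w, B z ((C r : ℝ[X]) • w) = r * B z w) ∧
      (∀ z w, B ((X : ℝ[X]) • z) w = B z ((X : ℝ[X]) • w)) ∧
      (∀ z, z ≠ 0 → ∃ w, B z w ≠ 0) := by
  classical
  obtain ⟨ι, hι, p, hp, e, ⟨f⟩⟩ := Module.equiv_directSum_of_isTorsion (R := ℝ[X]) (M := M) hT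
  choose Bb h1 h2 h3 h4 h5 h6 using fun i : ι =>
    block_form (p i ^ e i) (pow_ne_zero _ (hp i).ne_zero)
  have hB0r : ∀ i z, Bb i z 0 = 0 := by
    intro i z
    have := h2 i z 0 0
    rw [add_zero] at this
    linarith
  have hB0l : ∀ i w, Bb i 0 w = 0 := by
    intro i w
    have := h1 i 0 0 w
    rw [add_zero] at this
    linarith
  refine ⟨fun u v => ∑ i, Bb i (f u i) (f v i), ?_, ?_, ?_, ?_, ?_, ?_⟩
  · intro z z' w
    rw [← Finset.sum_add_distrib]
    refine Finset.sum_congr rfl fun i _ => ?_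
    rw [map_add]
    exact h1 i _ _ _
  · intro z w w'
    rw [← Finset.sum_add_distrib]
    refine Finset.sum_congr rfl fun i _ => ?_
    rw [map_add]
    exact h2 i _ _ _
  · intro r z w
    rw [Finset.mul_sum]
    refine Finset.sum_congr rfl fun i _ => ?_
    rw [_root_.map_smul, DFinsupp.smul_apply]
    exact h3 i r _ _
  · intro r z w
    rw [Finset.mul_sum]
    refine Finset.sum_congr rfl fun i _ => ?_
    rw [_root_.map_smul, DFinsupp.smul_apply]
    exact h4 i r _ _
  · intro z w
    refine Finset.sum_congr rfl fun i _ => ?_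
    rw [_root_.map_smul, _root_.map_smul, DFinsupp.smul_apply, DFinsupp.smul_apply]
    exact h5 i _ _
  · intro z hz
    have hfz : f z ≠ 0 := fun h => hz (by simpa using f.injective (by simpa using h))
    obtain ⟨i, hi⟩ : ∃ i, f z i ≠ 0 := by
      by_contra h
      push_neg at h
      exact hfz (DFinsupp.ext h)
    obtain ⟨w0, hw0⟩ := h6 i (f z i) hi
    refine ⟨f.symm (DirectSum.of _ i w0), ?_⟩
    show (∑ j, Bb j (f z j) (f (f.symm (DirectSum.of _ i w0)) j)) ≠ 0
    rw [f.apply_symm_apply]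
    rw [Finset.sum_eq_single i]
    · rwa [DirectSum.of_eq_same]
    · intro j _ hj
      rw [DirectSum.of_eq_of_ne _ _ _ hj, hB0r]
    · intro h
      exact absurd (Finset.mem_univ i) h

theorem stmt_5 {n : ℕ} (A : Matrix (Fin n) (Fin n) ℝ) :
    ∃ P : Matrix (Fin n) (Fin n) ℝ, IsUnit P.det ∧ Aᵀ = P⁻¹ * A * P := by
  classical
  set φ : (Fin n → ℝ) →ₗ[ℝ] (Fin n → ℝ) := Matrix.toLin' A with hφ
  have hT : Module.IsTorsion ℝ[X] (Module.AEval' φ) :=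
    Module.AEval.isTorsion_of_finiteDimensional ℝ (Fin n → ℝ) φ
  obtain ⟨B, hadd1, hadd2, hs1, hs2, hX, hnd⟩ := exists_form (Module.AEval' φ) hT
  set of' := Module.AEval'.of φ with hof
  set B₀ : (Fin n → ℝ) → (Fin n → ℝ) → ℝ := fun u v => B (of' u) (of' v) with hB₀
  -- bilinearity
  have hb1 : ∀ u u' v, B₀ (u + u') v = B₀ u v + B₀ u' v := by
    intro u u' v; simp only [hB₀, map_add]; exact hadd1 _ _ _
  have hb2 : ∀ u v v', B₀ u (v + v') = B₀ u v + B₀ u v' := by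
    intro u v v'; simp only [hB₀, map_add]; exact hadd2 _ _ _
  have hsm1 : ∀ (r : ℝ) u v, B₀ (r • u) v = r * B₀ u v := by
    intro r u v
    have : of' (r • u) = (C r : ℝ[X]) • of' u := by
      rw [LinearEquiv.map_smul, Module.AEval.C_smul]
    simp only [hB₀]; rw [this]; exact hs1 _ _ _
  have hsm2 : ∀ (r : ℝ) u v, B₀ u (r • v) = r * B₀ u v := by
    intro r u v
    have : of' (r • v) = (C r : ℝ[X]) • of' v := by
      rw [LinearEquiv.map_smul, Module.AEval.C_smul]
    simp only [hB₀]; rw [this]; exact hs2 _ _ _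
  have hA : ∀ u v, B₀ (A *ᵥ u) v = B₀ u (A *ᵥ v) := by
    intro u v
    have h1 : of' (A *ᵥ u) = (X : ℝ[X]) • of' u := by
      rw [Module.AEval'.X_smul_of]
      congr 1
    have h2 : of' (A *ᵥ v) = (X : ℝ[X]) • of' v := by
      rw [Module.AEval'.X_smul_of]
      congr 1
    simp only [hB₀]; rw [h1, h2]; exact hX _ _
  have hnd0 : ∀ u, u ≠ 0 → ∃ v, B₀ u v ≠ 0 := by
    intro u hu
    obtain ⟨w, hw⟩ := hnd (of' u) (fun h => hu (by simpa using of'.injective (by simpa using h)))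
    exact ⟨of'.symm w, by simpa only [hB₀, LinearEquiv.apply_symm_apply] using hw⟩
  -- package as a bilinear map and a matrix
  set L : (Fin n → ℝ) →ₗ[ℝ] (Fin n → ℝ) →ₗ[ℝ] ℝ :=
    LinearMap.mk₂ ℝ B₀ hb1 (fun c m n' => hsm1 c m n') hb2 (fun c m n' => hsm2 c m n') with hL
  set S : Matrix (Fin n) (Fin n) ℝ := LinearMap.toMatrix₂' ℝ L with hS
  have hSB : ∀ u v, B₀ u v = u ⬝ᵥ S *ᵥ v := by
    intro u v
    have : Matrix.toLinearMap₂' ℝ S u v = u ⬝ᵥ S *ᵥ v := Matrix.toLinearMap₂'_apply' _ _ _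
    rw [← this, hS, Matrix.toLinearMap₂'_toMatrix']
    rfl
  -- the matrix identity
  have key : ∀ u v, u ⬝ᵥ ((Aᵀ * S) *ᵥ v) = u ⬝ᵥ ((S * A) *ᵥ v) := by
    intro u v
    have h := hA u v
    rw [hSB, hSB] at h
    calc u ⬝ᵥ ((Aᵀ * S) *ᵥ v) = (A *ᵥ u) ⬝ᵥ (S *ᵥ v) := by
          rw [← Matrix.mulVec_mulVec, Matrix.dotProduct_mulVec, Matrix.vecMul_transpose]
      _ = u ⬝ᵥ (S *ᵥ (A *ᵥ v)) := h
      _ = u ⬝ᵥ ((S * A) *ᵥ v) := by rw [Matrix.mulVec_mulVec]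
  have hmat : Aᵀ * S = S * A := by
    ext i j
    have h := key (Pi.single i 1) (Pi.single j 1)
    simpa [Matrix.mulVec_single, single_dotProduct] using h
  have hdet : S.det ≠ 0 := by
    intro h0
    have h0' : Sᵀ.det = 0 := by rw [Matrix.det_transpose]; exact h0
    obtain ⟨v, hv0, hv⟩ := (Matrix.exists_mulVec_eq_zero_iff).mpr h0'
    obtain ⟨w, hw⟩ := hnd0 v hv0
    apply hw
    rw [hSB, Matrix.dotProduct_mulVec, ← Matrix.mulVec_transpose, hv, zero_dotProduct]
  have hSunit : IsUnit S.det := isUnit_iff_ne_zero.mpr hdet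
  refine ⟨S⁻¹, ?_, ?_⟩
  · rw [Matrix.det_nonsing_inv]
    simp only [Ring.inverse_eq_inv']
    exact isUnit_iff_ne_zero.mpr (inv_ne_zero hdet)
  · rw [Matrix.nonsing_inv_nonsing_inv S hSunit, ← hmat, Matrix.mul_assoc,
      Matrix.mul_nonsing_inv S hSunit, Matrix.mul_one]
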